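/- Let ℓ ≥ 1, r > 0, k ≥ 1, and let q : ℝ^ℓ → ℝ be real analytic on the open ball B(0,r) ⊂ ℝ^ℓ. Assume the iterated derivatives D^j q(0) vanish for every j with 1 ≤ j < k, and let P : ℝ^ℓ → ℝ be the degree-k Taylor term of q at 0, P(x) = (1/k!)·D^k q(0)[x,…,x]. Suppose (x_i) is a sequence in B(0,r) with x_i ≠ 0 for all i, x_i → 0, x_i/‖x_i‖ → w for some unit vector w, and Dq(x_i) = 0 for every i. Then DP(w) = 0, i.e. w is a critical point of the homogeneous polynomial P. -/

import Mathlib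

open Filter Function

section Aux

variable {E F : Type*} [NormedAddCommGroup E] [NormedSpace ℝ E]
  [NormedAddCommGroup F] [NormedSpace ℝ F]

lemma itf_adj_swap (f : E → F) (hf : ∀ j : ℕ, ContDiff ℝ j f) :
    ∀ (i : ℕ) {n : ℕ} (h : i + 1 < n) (x : E) (m : Fin n → E),
      iteratedFDeriv ℝ n f x m
        = iteratedFDeriv ℝ n f x (m ∘ Equiv.swap ⟨i, by omega⟩ ⟨i + 1, h⟩) := by
  intro i
  induction i with
  | zero =>
    intro n h x m
    obtain ⟨n', rfl⟩ : ∃ n', n = n' + 2 := ⟨n - 2, by omega⟩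
    have hg2 : ContDiffAt ℝ 2 (iteratedFDeriv ℝ n' f) x :=
      ((hf (2 + n')).iteratedFDeriv_right (by norm_cast)).contDiffAt
    have hsymm : IsSymmSndFDerivAt ℝ (iteratedFDeriv ℝ n' f) x :=
      hg2.isSymmSndFDerivAt (by simp)
    have key : ∀ m' : Fin (n' + 2) → E,
        iteratedFDeriv ℝ (n' + 2) f x m'
          = fderiv ℝ (fderiv ℝ (iteratedFDeriv ℝ n' f)) x (m' 0) (m' 1)
              (fun j => m' j.succ.succ) := by
      intro m'
      rw [iteratedFDeriv_succ_apply_left]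
      have h1 : iteratedFDeriv ℝ (n' + 1) f
          = ⇑(continuousMultilinearCurryLeftEquiv ℝ (fun _ : Fin (n' + 1) => E) F).symm
            ∘ fderiv ℝ (iteratedFDeriv ℝ n' f) := iteratedFDeriv_succ_eq_comp_left
      have h2 := LinearIsometryEquiv.comp_fderiv (𝕜 := ℝ) (continuousMultilinearCurryLeftEquiv ℝ (fun _ : Fin (n' + 1) => E) F).symm
        (f := fderiv ℝ (iteratedFDeriv ℝ n' f)) (x := x)
      rw [h1, h2]
      rfl
    rw [key m, key _]
    have e0 : (m ∘ Equiv.swap (⟨0, by omega⟩ : Fin (n' + 2)) ⟨1, h⟩) 0 = m 1 := by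
      simp only [comp_apply]
      congr 1
    have e1 : (m ∘ Equiv.swap (⟨0, by omega⟩ : Fin (n' + 2)) ⟨1, h⟩) 1 = m 0 := by
      simp only [comp_apply]
      congr 1
    have er : (fun j : Fin n' => (m ∘ Equiv.swap (⟨0, by omega⟩ : Fin (n' + 2)) ⟨1, h⟩)
        j.succ.succ) = fun j => m j.succ.succ := by
      funext j
      simp only [comp_apply]
      congr 1
    rw [e0, e1, er, hsymm.eq (m 0) (m 1)]
  | succ i ih =>
    intro n h x m
    obtain ⟨n', rfl⟩ : ∃ n', n = n' + 1 := ⟨n - 1, by omega⟩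
    have hi : i + 1 < n' := by omega
    rw [iteratedFDeriv_succ_apply_left, iteratedFDeriv_succ_apply_left]
    have hm0 : (m ∘ Equiv.swap (⟨i + 1, by omega⟩ : Fin (n' + 1)) ⟨i + 2, h⟩) 0 = m 0 := by
      simp only [comp_apply]
      congr 1
    have htail : Fin.tail (m ∘ Equiv.swap (⟨i + 1, by omega⟩ : Fin (n' + 1)) ⟨i + 2, h⟩)
        = (Fin.tail m) ∘ Equiv.swap (⟨i, by omega⟩ : Fin n') ⟨i + 1, hi⟩ := by
      funext j
      simp only [Fin.tail, comp_apply]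
      congr 1
      have hs : (⟨i + 1, by omega⟩ : Fin (n' + 1)) = Fin.succ ⟨i, by omega⟩ := rfl
      have hs2 : (⟨i + 2, h⟩ : Fin (n' + 1)) = Fin.succ ⟨i + 1, hi⟩ := rfl
      rw [hs, hs2, (Fin.succ_injective n').swap_apply]
    rw [hm0, htail]
    set v := Fin.tail m with hv
    set Φ : ContinuousMultilinearMap ℝ (fun _ : Fin n' => E) F →L[ℝ] F :=
      ContinuousMultilinearMap.apply ℝ (fun _ : Fin n' => E) F v
        - ContinuousMultilinearMap.apply ℝ (fun _ : Fin n' => E) F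
            (v ∘ Equiv.swap (⟨i, by omega⟩ : Fin n') ⟨i + 1, hi⟩) with hΦ
    have hz : (fun y => Φ (iteratedFDeriv ℝ n' f y)) = fun _ => (0 : F) := by
      funext y
      simp only [hΦ, ContinuousLinearMap.sub_apply, ContinuousMultilinearMap.apply_apply]
      rw [← ih hi y v, sub_self]
    have hdiff : DifferentiableAt ℝ (iteratedFDeriv ℝ n' f) x :=
      (((hf (1 + n')).iteratedFDeriv_right (m := 1) (by norm_cast)).differentiable one_ne_zero).differentiableAt
    have hcomp : fderiv ℝ (fun y => Φ (iteratedFDeriv ℝ n' f y)) x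
        = Φ.comp (fderiv ℝ (iteratedFDeriv ℝ n' f) x) :=
      (Φ.hasFDerivAt.comp x hdiff.hasFDerivAt).fderiv
    rw [hz, fderiv_const_apply] at hcomp
    have happ := congrFun (congrArg DFunLike.coe hcomp) (m 0)
    simp only [ContinuousLinearMap.comp_apply, ContinuousLinearMap.zero_apply, hΦ,
      ContinuousLinearMap.sub_apply, ContinuousMultilinearMap.apply_apply] at happ
    exact sub_eq_zero.mp happ.symm

end Aux

section Aux2

variable {E F : Type*} [NormedAddCommGroup E] [NormedSpace ℝ E]
  [NormedAddCommGroup F] [NormedSpace ℝ F]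

lemma itf_update_to_last (f : E → F) (hf : ∀ j : ℕ, ContDiff ℝ j f) {n : ℕ} (x w v : E) :
    ∀ (d j : ℕ) (hj : j < n + 1), j + d = n →
      iteratedFDeriv ℝ (n + 1) f x (Function.update (fun _ => w) ⟨j, hj⟩ v)
        = iteratedFDeriv ℝ (n + 1) f x (Function.update (fun _ => w) (Fin.last n) v)
  | 0, j, hj, hd => by
      have : (⟨j, hj⟩ : Fin (n + 1)) = Fin.last n := by ext; simp; omega
      rw [this]
  | (d + 1), j, hj, hd => by
      have h1 : j + 1 < n + 1 := by omega
      have hswap : (Function.update (fun _ : Fin (n + 1) => w) ⟨j, hj⟩ v)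
            ∘ (Equiv.swap (⟨j, by omega⟩ : Fin (n + 1)) ⟨j + 1, h1⟩)
          = Function.update (fun _ : Fin (n + 1) => w) ⟨j + 1, h1⟩ v := by
        funext a
        simp only [comp_apply, Function.update_apply, Equiv.swap_apply_def]
        split_ifs <;> simp_all [Fin.ext_iff]
      have hstep := itf_adj_swap f hf j (by omega : j + 1 < n + 1) x
        (Function.update (fun _ => w) ⟨j, hj⟩ v)
      rw [hstep, hswap]
      exact itf_update_to_last f hf x w v d (j + 1) h1 (by omega)

end Aux2


/-- If `q` is analytic on `B(0,r)`, its derivatives of order `1 ≤ j < k` vanish at `0`,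
`P` is the degree-`k` Taylor term of `q` at `0`, and `(x i)` is a sequence of nonzero critical
points of `q` converging to `0` with directions `x i / ‖x i‖` converging to a unit vector `w`,
then `w` is a critical point of `P`. -/
theorem stmt_1 (ℓ k : ℕ) (hℓ : 1 ≤ ℓ) (hk : 1 ≤ k) (r : ℝ) (hr : 0 < r)
    (q : EuclideanSpace ℝ (Fin ℓ) → ℝ)
    (hq : AnalyticOnNhd ℝ q (Metric.ball 0 r))
    (hder : ∀ j : ℕ, 1 ≤ j → j < k → iteratedFDeriv ℝ j q 0 = 0)
    (P : EuclideanSpace ℝ (Fin ℓ) → ℝ)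
    (hP : ∀ x, P x = ((k.factorial : ℝ))⁻¹ * iteratedFDeriv ℝ k q 0 (fun _ => x))
    (x : ℕ → EuclideanSpace ℝ (Fin ℓ))
    (hball : ∀ i, x i ∈ Metric.ball (0 : EuclideanSpace ℝ (Fin ℓ)) r)
    (hne : ∀ i, x i ≠ 0)
    (hlim : Filter.Tendsto x Filter.atTop (nhds 0))
    (w : EuclideanSpace ℝ (Fin ℓ)) (hw : ‖w‖ = 1)
    (hdir : Filter.Tendsto (fun i => (‖x i‖)⁻¹ • x i) Filter.atTop (nhds w))
    (hcrit : ∀ i, fderiv ℝ q (x i) = 0) :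
    fderiv ℝ P w = 0 := by
  classical
  obtain ⟨k', rfl⟩ : ∃ k', k = k' + 1 := ⟨k - 1, by omega⟩
  have h0 : (0 : EuclideanSpace ℝ (Fin ℓ)) ∈ Metric.ball (0 : EuclideanSpace ℝ (Fin ℓ)) r :=
    Metric.mem_ball_self hr
  have hG : AnalyticAt ℝ (fderiv ℝ q) 0 := hq.fderiv 0 h0
  obtain ⟨pG, hpGat⟩ := hG
  obtain ⟨rG, hpG⟩ := hpGat
  have hpGat : HasFPowerSeriesAt (fderiv ℝ q) pG 0 := ⟨rG, hpG⟩
  set T : EuclideanSpace ℝ (Fin ℓ) → (EuclideanSpace ℝ (Fin ℓ) →L[ℝ] ℝ) :=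
    fun y => iteratedFDeriv ℝ k' (fderiv ℝ q) 0 (fun _ => y) with hT
  -- vanishing of lower diagonal derivatives of fderiv q
  have hGj : ∀ j, j < k' → ∀ y : EuclideanSpace ℝ (Fin ℓ),
      iteratedFDeriv ℝ j (fderiv ℝ q) 0 (fun _ => y) = 0 := by
    intro j hj y
    ext v
    match j, hj with
    | 0, hj =>
      rw [iteratedFDeriv_zero_apply]
      have h1 : fderiv ℝ q 0 v = iteratedFDeriv ℝ 1 q 0 (fun _ => v) := by
        rw [iteratedFDeriv_one_apply]
      rw [ContinuousLinearMap.zero_apply, h1, hder 1 le_rfl (by omega)]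
      rfl
    | (j + 1), hj =>
      have h2 := iteratedFDeriv_succ_apply_right (𝕜 := ℝ) (n := j + 1) (f := q) (x := 0)
        (Fin.snoc (fun _ => y) v)
      rw [Fin.init_snoc, Fin.snoc_last] at h2
      rw [← h2, hder (j + 2) (by omega) (by omega)]
      rfl
  -- the partial sum of order k'+1 of the series of fderiv q
  have hpart : ∀ y, pG.partialSum (k' + 1) y = ((k'.factorial : ℝ))⁻¹ • T y := by
    intro y
    rw [FormalMultilinearSeries.partialSum, Finset.sum_range_succ]
    have hzero : ∀ j ∈ Finset.range k', (pG j fun _ => y) = 0 := by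
      intro j hj
      have hfac := hpG.factorial_smul y j
      rw [hGj j (Finset.mem_range.mp hj) y] at hfac
      have h3 : (j.factorial : ℝ) • (pG j fun _ => y) = 0 := by
        rw [Nat.cast_smul_eq_nsmul]; exact hfac
      rcases smul_eq_zero.mp h3 with h | h
      · exact absurd h (by exact_mod_cast j.factorial_ne_zero)
      · exact h
    rw [Finset.sum_eq_zero hzero, zero_add]
    have hfac := hpG.factorial_smul y k'
    rw [← Nat.cast_smul_eq_nsmul ℝ] at hfac
    show (pG k' fun _ => y)
      = ((k'.factorial : ℝ))⁻¹ • iteratedFDeriv ℝ k' (fderiv ℝ q) 0 (fun _ => y)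
    rw [← hfac, smul_smul, inv_mul_cancel₀ (by exact_mod_cast k'.factorial_ne_zero), one_smul]
  -- big-O estimate along the sequence
  have hO := (hpGat.isBigO_sub_partialSum_pow (k' + 1)).comp_tendsto hlim
  have hO2 : (fun i => T (x i)) =O[Filter.atTop] fun i => ‖x i‖ ^ (k' + 1) := by
    simp only [Function.comp_def, zero_add, hpart, hcrit, zero_sub] at hO
    have hO' : (fun i => ((k'.factorial : ℝ))⁻¹ • T (x i)) =O[Filter.atTop]
        fun i => ‖x i‖ ^ (k' + 1) := by simpa using hO.neg_left
    have h4 : (fun i => T (x i))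
        = fun i => ((k'.factorial : ℝ)) • (((k'.factorial : ℝ))⁻¹ • T (x i)) := by
      funext i
      rw [smul_smul, mul_inv_cancel₀ (by exact_mod_cast k'.factorial_ne_zero), one_smul]
    rw [h4]
    exact hO'.const_smul_left ((k'.factorial : ℝ))
  obtain ⟨C, hC⟩ := hO2.bound
  have hxpos : ∀ i, (0 : ℝ) < ‖x i‖ := fun i => norm_pos_iff.mpr (hne i)
  have hhom : ∀ i, T ((‖x i‖)⁻¹ • x i) = ((‖x i‖)⁻¹) ^ k' • T (x i) := by
    intro i
    have h5 := (iteratedFDeriv ℝ k' (fderiv ℝ q) 0).map_smul_univ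
      (fun _ : Fin k' => (‖x i‖)⁻¹) (fun _ => x i)
    simpa [Finset.prod_const] using h5
  have hbound : ∀ᶠ i in Filter.atTop, ‖T ((‖x i‖)⁻¹ • x i)‖ ≤ (max C 0) * ‖x i‖ := by
    filter_upwards [hC] with i hi
    rw [hhom i, norm_smul ((‖x i‖)⁻¹ ^ k') (T (x i))]
    have h6 : ‖((‖x i‖)⁻¹ ^ k' : ℝ)‖ = ((‖x i‖)⁻¹) ^ k' := by
      rw [Real.norm_eq_abs, abs_of_nonneg (by positivity)]
    rw [h6]
    have h7 : ‖(‖x i‖ ^ (k' + 1) : ℝ)‖ = ‖x i‖ ^ (k' + 1) := by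
      rw [Real.norm_eq_abs, abs_of_nonneg (by positivity)]
    rw [h7] at hi
    calc ((‖x i‖)⁻¹) ^ k' * ‖T (x i)‖
        ≤ ((‖x i‖)⁻¹) ^ k' * (C * ‖x i‖ ^ (k' + 1)) := by
          apply mul_le_mul_of_nonneg_left hi (by positivity)
      _ = C * ‖x i‖ := by
          rw [pow_succ, inv_pow]
          calc (‖x i‖ ^ k')⁻¹ * (C * (‖x i‖ ^ k' * ‖x i‖))
              = ((‖x i‖ ^ k')⁻¹ * ‖x i‖ ^ k') * (C * ‖x i‖) := by ring
            _ = C * ‖x i‖ := by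
                rw [inv_mul_cancel₀ (pow_ne_zero _ (hxpos i).ne'), one_mul]
      _ ≤ (max C 0) * ‖x i‖ := by
          apply mul_le_mul_of_nonneg_right (le_max_left _ _) (le_of_lt (hxpos i))
  have htendC : Filter.Tendsto (fun i => (max C 0) * ‖x i‖) Filter.atTop (nhds 0) := by
    have h8 : Filter.Tendsto (fun i => ‖x i‖) Filter.atTop (nhds 0) := by
      simpa [Function.comp_def] using (continuous_norm.tendsto (0 : EuclideanSpace ℝ (Fin ℓ))).comp hlim
    simpa using h8.const_mul (max C 0)
  have hlim0 : Filter.Tendsto (fun i => T ((‖x i‖)⁻¹ • x i)) Filter.atTop (nhds 0) :=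
    squeeze_zero_norm' hbound htendC
  have hTcont : Continuous T := by
    rw [hT]
    exact (iteratedFDeriv ℝ k' (fderiv ℝ q) 0).cont.comp
      (continuous_pi fun _ => continuous_id)
  have hTw : T w = 0 :=
    tendsto_nhds_unique ((hTcont.tendsto w).comp hdir) hlim0
  -- hence the k-th derivative of q vanishes on (w,...,w,v)
  have hsnoc : ∀ v, iteratedFDeriv ℝ (k' + 1) q 0 (Fin.snoc (fun _ => w) v) = 0 := by
    intro v
    rw [iteratedFDeriv_succ_apply_right, Fin.init_snoc, Fin.snoc_last]
    have h9 : iteratedFDeriv ℝ k' (fderiv ℝ q) 0 (fun _ => w) = 0 := hTw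
    rw [h9]
    rfl
  -- a globally smooth function agreeing with q near 0
  obtain ⟨f, hfsmooth, hfq⟩ :
      ∃ f : EuclideanSpace ℝ (Fin ℓ) → ℝ, (∀ j : ℕ, ContDiff ℝ j f) ∧ f =ᶠ[nhds 0] q := by
    have hb : 0 < r / 3 := by positivity
    let b : ContDiffBump (0 : EuclideanSpace ℝ (Fin ℓ)) := ⟨r / 3, r / 2, hb, by linarith⟩
    refine ⟨fun y => b y * q y, ?_, ?_⟩
    · intro j
      rw [contDiff_iff_contDiffAt]
      intro y
      by_cases hy : y ∈ Metric.ball (0 : EuclideanSpace ℝ (Fin ℓ)) r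
      · exact b.contDiffAt.mul (hq y hy).contDiffAt
      · have hyd : b.rOut < dist y 0 := by
          rw [Metric.mem_ball, not_lt] at hy
          calc b.rOut = r / 2 := rfl
            _ < r := by linarith
            _ ≤ dist y 0 := hy
        have hmem : y ∈ (Metric.closedBall (0 : EuclideanSpace ℝ (Fin ℓ)) b.rOut)ᶜ := by
          simp only [Set.mem_compl_iff, Metric.mem_closedBall, not_le]
          exact hyd
        have hev : (fun z => b z * q z) =ᶠ[nhds y] fun _ => (0 : ℝ) := by
          filter_upwards [Metric.isClosed_closedBall.isOpen_compl.mem_nhds hmem] with z hz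
          simp only [Set.mem_compl_iff, Metric.mem_closedBall, not_le] at hz
          rw [b.zero_of_le_dist hz.le, zero_mul]
        exact (contDiffAt_const (c := (0 : ℝ))).congr_of_eventuallyEq hev
    · filter_upwards [b.eventuallyEq_one] with z hz
      show b z * q z = q z
      rw [hz, Pi.one_apply, one_mul]
  have hAf : ∀ n : ℕ, iteratedFDeriv ℝ n f 0 = iteratedFDeriv ℝ n q 0 := by
    intro n
    have h1 : f =ᶠ[nhdsWithin (0 : EuclideanSpace ℝ (Fin ℓ)) Set.univ] q :=
      hfq.filter_mono nhdsWithin_le_nhds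
    have h2 := Filter.EventuallyEq.iteratedFDerivWithin_eq (𝕜 := ℝ) h1 hfq.self_of_nhds n
    rwa [iteratedFDerivWithin_univ, iteratedFDerivWithin_univ] at h2
  -- all slot-updates vanish
  have hupd : ∀ (j : Fin (k' + 1)) (v : EuclideanSpace ℝ (Fin ℓ)),
      iteratedFDeriv ℝ (k' + 1) q 0 (Function.update (fun _ => w) j v) = 0 := by
    intro j v
    rw [← hAf (k' + 1)]
    have hje : (⟨j.val, j.isLt⟩ : Fin (k' + 1)) = j := by ext; rfl
    have h10 := itf_update_to_last f hfsmooth 0 w v (k' - j.val) j.val j.isLt (by omega)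
    rw [hje] at h10
    rw [h10]
    have h11 : Function.update (fun _ : Fin (k' + 1) => w) (Fin.last k') v
        = Fin.snoc (fun _ => w) v := by
      funext a
      refine Fin.lastCases ?_ (fun a => ?_) a
      · rw [Function.update_self, Fin.snoc_last]
      · rw [Function.update_of_ne (Fin.castSucc_lt_last a).ne, Fin.snoc_castSucc]
    rw [h11, hAf (k' + 1)]
    exact hsnoc v
  -- derivative of P
  have hPfun : P = fun y => (((k' + 1).factorial : ℝ))⁻¹
      * iteratedFDeriv ℝ (k' + 1) q 0 (fun _ => y) := funext hP
  have hder1 : HasFDerivAt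
      (fun y : EuclideanSpace ℝ (Fin ℓ) => iteratedFDeriv ℝ (k' + 1) q 0 (fun _ => y))
      (∑ j : Fin (k' + 1),
        ((iteratedFDeriv ℝ (k' + 1) q 0).toContinuousLinearMap (fun _ => w) j).comp
          (ContinuousLinearMap.id ℝ (EuclideanSpace ℝ (Fin ℓ)))) w :=
    HasFDerivAt.multilinear_comp _ (fun _ => hasFDerivAt_id w)
  have hder2 : HasFDerivAt P
      ((((k' + 1).factorial : ℝ))⁻¹ • (∑ j : Fin (k' + 1),
        ((iteratedFDeriv ℝ (k' + 1) q 0).toContinuousLinearMap (fun _ => w) j).comp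
          (ContinuousLinearMap.id ℝ (EuclideanSpace ℝ (Fin ℓ))))) w := by
    rw [hPfun]
    exact hder1.const_mul _
  rw [hder2.fderiv]
  ext v
  simp only [ContinuousLinearMap.smul_apply, ContinuousLinearMap.coe_sum', Finset.sum_apply,
    ContinuousLinearMap.comp_apply, ContinuousLinearMap.id_apply,
    ContinuousMultilinearMap.toContinuousLinearMap_apply, ContinuousLinearMap.zero_apply]
  rw [Finset.sum_eq_zero fun j _ => hupd j v, smul_zero]
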